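/- arXiv:1806.09363 — 4 statements merged into one kernel-verified Lean document; each statement's English description precedes it below -/
import Mathlib

section
/- For the map T(x) = x(1+2^α x^α) on [0,1/2), the sequence defined by a_0 = 1/2 and a_{n+1} = the unique preimage of a_n under T in [0,1/2) satisfies a_n ≤ C · n^{-1/α} for some constant C > 0 and all n ≥ 1. -/
open MeasureTheory Filter Real Set

/-- The intermittent (Liverani–Saussol–Vaienti) map. -/
noncomputable def T (α : ℝ) (x : ℝ) : ℝ :=
  if x < 1/2 then x * (1 + 2 ^ α * x ^ α) else 2 * x - 1

theorem stmt0 (α : ℝ) (hα0 : 0 < α) (hα1 : α < 1) (a : ℕ → ℝ)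
    (ha0 : a 0 = 1/2)
    (ha : ∀ n, T α (a (n+1)) = a n ∧ a (n+1) ∈ Set.Ico (0:ℝ) (1/2)) :
    ∃ C > 0, ∀ n ≥ 1, a n ≤ C * (n : ℝ) ^ (-(1/α)) := by
  -- recurrence in explicit form
  have hrec : ∀ n, a (n+1) * (1 + 2 ^ α * (a (n+1)) ^ α) = a n := by
    intro n
    have h := (ha n).1
    rw [T, if_pos (ha n).2.2] at h
    exact h
  have hpos : ∀ n, 0 < a n := by
    intro n
    induction n with
    | zero => rw [ha0]; norm_num
    | succ m ih =>
      rcases lt_or_eq_of_le (ha m).2.1 with h | h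
      · exact h
      · exfalso
        have := hrec m
        rw [← h] at this
        simp at this
        rw [← this] at ih
        exact lt_irrefl _ ih
  -- key step: b_{n+1} ≥ b_n + α/2 where b_n = a_n ^ (-α)
  have step : ∀ n, (a n) ^ (-α) + α/2 ≤ (a (n+1)) ^ (-α) := by
    intro n
    set x := a (n+1) with hxdef
    have hx0 : 0 < x := hpos (n+1)
    have hxh : x < 1/2 := (ha n).2.2
    set u : ℝ := 2 ^ α * x ^ α with hudef
    have h2pos : (0:ℝ) < 2 ^ α := Real.rpow_pos_of_pos two_pos α
    have hu0 : 0 < u := mul_pos h2pos (Real.rpow_pos_of_pos hx0 α)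
    have hu1 : u ≤ 1 := by
      have hxa : x ^ α ≤ (1/2 : ℝ) ^ α := Real.rpow_le_rpow hx0.le hxh.le hα0.le
      have : u ≤ 2 ^ α * (1/2 : ℝ) ^ α := by
        exact mul_le_mul_of_nonneg_left hxa h2pos.le
      calc u ≤ 2 ^ α * (1/2 : ℝ) ^ α := this
        _ = ((2 : ℝ) * (1/2)) ^ α := (Real.mul_rpow (by norm_num) (by norm_num)).symm
        _ = 1 := by norm_num
    have h1u : (0:ℝ) < 1 + u := by linarith
    -- a n = x * (1 + u)
    have han : a n = x * (1 + u) := by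
      have := hrec n
      rw [← hxdef, ← hudef] at this
      linarith [this]
    -- (1+u)⁻¹ ≤ 1 - u/2
    have hinv : (1 + u)⁻¹ ≤ 1 - u/2 := by
      have h1 : (1 + u) * (1 + u)⁻¹ = 1 := mul_inv_cancel₀ (ne_of_gt h1u)
      nlinarith [inv_pos.mpr h1u, sq_nonneg u, mul_le_one₀ hu1 hu0.le hu1]
    -- (1+u)^(-α) ≤ 1 - α * u / 2
    have hber : (1 + u) ^ (-α) ≤ 1 - α * u / 2 := by
      have e1 : (1 + u) ^ (-α) = ((1 + u)⁻¹) ^ α := by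
        rw [Real.inv_rpow h1u.le, ← Real.rpow_neg h1u.le]
      have e2 : ((1 + u)⁻¹) ^ α ≤ (1 - u/2) ^ α :=
        Real.rpow_le_rpow (inv_pos.mpr h1u).le hinv hα0.le
      have e3 : (1 - u/2) ^ α ≤ 1 + α * (-(u/2)) := by
        have := rpow_one_add_le_one_add_mul_self
          (s := -(u/2)) (by linarith) (p := α) hα0.le hα1.le
        have he : 1 + -(u/2) = 1 - u/2 := by ring
        rw [he] at this
        exact this
      calc (1 + u) ^ (-α) = ((1 + u)⁻¹) ^ α := e1
        _ ≤ (1 - u/2) ^ α := e2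
        _ ≤ 1 + α * (-(u/2)) := e3
        _ = 1 - α * u / 2 := by ring
    -- x^(-α) * u = 2^α
    have hxu : x ^ (-α) * u = 2 ^ α := by
      rw [Real.rpow_neg hx0.le, hudef]
      field_simp
    have hxna : 0 < x ^ (-α) := Real.rpow_pos_of_pos hx0 (-α)
    -- (a n)^(-α) = x^(-α) * (1+u)^(-α)
    have hban : (a n) ^ (-α) = x ^ (-α) * (1 + u) ^ (-α) := by
      rw [han, Real.mul_rpow hx0.le h1u.le]
    rw [hban]
    have h2ge1 : (1:ℝ) ≤ 2 ^ α := Real.one_le_rpow one_le_two hα0.le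
    -- x^(-α) * (1 - (1+u)^(-α)) ≥ x^(-α) * (α u / 2) = (α/2) * 2^α ≥ α/2
    have key : x ^ (-α) * (1 - (1 + u) ^ (-α)) ≥ α / 2 := by
      have h1 : x ^ (-α) * (1 - (1 + u) ^ (-α)) ≥ x ^ (-α) * (α * u / 2) := by
        apply mul_le_mul_of_nonneg_left _ hxna.le
        linarith
      have h2 : x ^ (-α) * (α * u / 2) = (α / 2) * 2 ^ α := by
        have : x ^ (-α) * (α * u / 2) = (α/2) * (x ^ (-α) * u) := by ring
        rw [this, hxu]
      rw [h2] at h1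
      calc α / 2 = α / 2 * 1 := by ring
        _ ≤ α / 2 * 2 ^ α := by
            apply mul_le_mul_of_nonneg_left h2ge1 (by linarith)
        _ ≤ x ^ (-α) * (1 - (1 + u) ^ (-α)) := h1
    linarith [key]
  -- b_n ≥ n * (α/2)
  have bound : ∀ n : ℕ, (n : ℝ) * (α/2) ≤ (a n) ^ (-α) := by
    intro n
    induction n with
    | zero => simp [Real.rpow_nonneg (hpos 0).le]
    | succ m ih =>
      have := step m
      push_cast
      linarith
  refine ⟨(α/2) ^ (-(1/α)), Real.rpow_pos_of_pos (by linarith) _, ?_⟩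
  intro n hn
  have hn0 : (0:ℝ) < (n:ℝ) := by exact_mod_cast hn
  have hc : (0:ℝ) < (n:ℝ) * (α/2) := mul_pos hn0 (by linarith)
  have h1 : ((a n) ^ (-α)) ^ (-(1/α)) ≤ ((n:ℝ) * (α/2)) ^ (-(1/α)) :=
    Real.rpow_le_rpow_of_nonpos hc (bound n) (by rw [neg_nonpos]; positivity)
  have h2 : ((a n) ^ (-α)) ^ (-(1/α)) = a n := by
    rw [← Real.rpow_mul (hpos n).le]
    have : -α * -(1/α) = 1 := by field_simp
    rw [this, Real.rpow_one]
  have h3 : ((n:ℝ) * (α/2)) ^ (-(1/α)) = (α/2) ^ (-(1/α)) * (n:ℝ) ^ (-(1/α)) := by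
    rw [Real.mul_rpow hn0.le (by linarith : (0:ℝ) ≤ α/2)]
    ring
  rw [h2, h3] at h1
  exact h1
end

section
/- Let μ be the absolutely continuous T_α-invariant probability measure and suppose a_n ≤ C n^{-1/α}. Fix 0 < ε < 1−α. Then the series ∑_{i≥1} μ{ x : T_α^{i−1}(x) ∈ [1/2,1) ∩ T_α^{-1}[0, a_{⌈i^{α+ε}⌉}] } converges, and hence by the Borel–Cantelli lemma, for μ-almost every x there are only finitely many i with T_α^{i−1}(x) ∈ [1/2,1) ∩ T_α^{-1}[0, a_{⌈i^{α+ε}⌉}]. -/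
open MeasureTheory Filter Real Set

theorem stmt7 (α ε : ℝ) (hα0 : 0 < α) (hα1 : α < 1) (hε0 : 0 < ε) (hε : ε < 1 - α)
    (a : ℕ → ℝ) (ha0 : a 0 = 1/2)
    (ha : ∀ n, T α (a (n+1)) = a n ∧ a (n+1) ∈ Set.Ico (0:ℝ) (1/2))
    (C : ℝ) (hC : 0 < C) (haC : ∀ n ≥ 1, a n ≤ C * (n : ℝ) ^ (-(1/α)))
    (μ : Measure ℝ) [IsProbabilityMeasure μ]
    (hinv : MeasurePreserving (T α) μ μ) (hac : μ ≪ volume)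
    (Ct : ℝ) (hCt : 0 < Ct)
    (hμleb : ∀ b c : ℝ, μ (Set.Ico (1/2:ℝ) 1 ∩ Set.Icc b c) ≤ ENNReal.ofReal (Ct * (c - b))) :
    Summable (fun i : ℕ =>
      (μ {x | (T α)^[i] x ∈ Set.Ico (1/2:ℝ) 1 ∩
        (T α) ⁻¹' (Set.Icc 0 (a ⌈((i : ℝ) + 1) ^ (α + ε)⌉₊))}).toReal) ∧
    ∀ᵐ x ∂μ, Set.Finite {i : ℕ | (T α)^[i] x ∈ Set.Ico (1/2:ℝ) 1 ∩
        (T α) ⁻¹' (Set.Icc 0 (a ⌈((i : ℝ) + 1) ^ (α + ε)⌉₊))} := by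
  have hT_meas : Measurable (T α) := by
    unfold T
    exact Measurable.ite (measurableSet_lt measurable_id measurable_const)
      (measurable_id.mul (measurable_const.add
        (measurable_const.mul ((Real.continuous_rpow_const hα0.le).measurable)))) <|
      (measurable_const.mul measurable_id).sub measurable_const
  set q : ℝ := -((α + ε) / α) with hq_def
  have hq : q < -1 := by
    rw [hq_def, neg_lt, neg_neg]
    rw [lt_div_iff₀ hα0]; linarith
  -- the target sets
  set S : ℕ → Set ℝ := fun i =>
    Set.Ico (1/2:ℝ) 1 ∩ (T α) ⁻¹' (Set.Icc 0 (a ⌈((i : ℝ) + 1) ^ (α + ε)⌉₊)) with hS_def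
  have hS_meas : ∀ i, MeasurableSet (S i) := fun i =>
    measurableSet_Ico.inter (hT_meas measurableSet_Icc)
  have hpre : ∀ i, μ {x | (T α)^[i] x ∈ S i} = μ (S i) := fun i =>
    (hinv.iterate i).measure_preimage (hS_meas i).nullMeasurableSet
  -- key bound on μ (S i)
  have hbound : ∀ i : ℕ, μ (S i) ≤ ENNReal.ofReal (Ct * C / 2 * ((i : ℝ) + 1) ^ q) := by
    intro i
    set N : ℕ := ⌈((i : ℝ) + 1) ^ (α + ε)⌉₊ with hN_def
    have hip : (0:ℝ) < (i : ℝ) + 1 := by positivity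
    have hipow : (0:ℝ) < ((i : ℝ) + 1) ^ (α + ε) := Real.rpow_pos_of_pos hip _
    have hN1 : 1 ≤ N := Nat.one_le_ceil_iff.mpr hipow
    have hNge : ((i : ℝ) + 1) ^ (α + ε) ≤ (N : ℝ) := Nat.le_ceil _
    have haN : a N ≤ C * ((i : ℝ) + 1) ^ q := by
      refine (haC N hN1).trans ?_
      have h1 : (N : ℝ) ^ (-(1/α)) ≤ (((i : ℝ) + 1) ^ (α + ε)) ^ (-(1/α)) :=
        Real.rpow_le_rpow_of_nonpos hipow hNge (neg_nonpos.mpr (by positivity))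
      have h2 : (((i : ℝ) + 1) ^ (α + ε)) ^ (-(1/α)) = ((i : ℝ) + 1) ^ q := by
        rw [← Real.rpow_mul hip.le]
        congr 1
        rw [hq_def]
        field_simp
      exact mul_le_mul_of_nonneg_left (h1.trans_eq h2) hC.le
    have hsub : S i ⊆ Set.Ico (1/2:ℝ) 1 ∩ Set.Icc (1/2) ((1 + a N) / 2) := by
      rintro x ⟨⟨hx1, hx2⟩, hTx⟩
      have hTeq : T α x = 2 * x - 1 := if_neg (not_lt.mpr hx1)
      rw [Set.mem_preimage, hTeq, Set.mem_Icc] at hTx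
      exact ⟨⟨hx1, hx2⟩, hx1, by linarith [hTx.2]⟩
    calc μ (S i) ≤ μ (Set.Ico (1/2:ℝ) 1 ∩ Set.Icc (1/2) ((1 + a N) / 2)) :=
          measure_mono hsub
      _ ≤ ENNReal.ofReal (Ct * ((1 + a N) / 2 - 1/2)) := hμleb _ _
      _ ≤ ENNReal.ofReal (Ct * C / 2 * ((i : ℝ) + 1) ^ q) := by
          apply ENNReal.ofReal_le_ofReal
          have : (1 + a N) / 2 - 1/2 = a N / 2 := by ring
          rw [this]
          calc Ct * (a N / 2) ≤ Ct * (C * ((i : ℝ) + 1) ^ q / 2) := by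
                apply mul_le_mul_of_nonneg_left _ hCt.le
                linarith
            _ = Ct * C / 2 * ((i : ℝ) + 1) ^ q := by ring
  -- summability of the bound
  have hg : Summable (fun i : ℕ => Ct * C / 2 * ((i : ℝ) + 1) ^ q) := by
    have h0 : Summable (fun n : ℕ => (n : ℝ) ^ q) := Real.summable_nat_rpow.mpr hq
    have h1 : Summable (fun i : ℕ => ((i + 1 : ℕ) : ℝ) ^ q) :=
      (summable_nat_add_iff 1).mpr h0
    have h2 : Summable (fun i : ℕ => ((i : ℝ) + 1) ^ q) := by
      convert h1 using 2 with i; push_cast; ring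
    exact h2.mul_left _
  have hg_nonneg : ∀ i : ℕ, 0 ≤ Ct * C / 2 * ((i : ℝ) + 1) ^ q := by
    intro i; positivity
  have htsum : (∑' i : ℕ, μ {x | (T α)^[i] x ∈ S i}) ≠ ⊤ := by
    apply ne_top_of_le_ne_top (b := ∑' i : ℕ, ENNReal.ofReal (Ct * C / 2 * ((i : ℝ) + 1) ^ q))
    · rw [← ENNReal.ofReal_tsum_of_nonneg hg_nonneg hg]
      exact ENNReal.ofReal_ne_top
    · exact ENNReal.tsum_le_tsum fun i => (hpre i).le.trans (hbound i)
  constructor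
  · exact ENNReal.summable_toReal htsum
  · have h0 : μ {x | ∃ᶠ i in atTop, (T α)^[i] x ∈ S i} = 0 :=
      measure_setOf_frequently_eq_zero htsum
    have hae : ∀ᵐ x ∂μ, ¬ ∃ᶠ i in atTop, (T α)^[i] x ∈ S i := by
      rw [ae_iff]
      simpa only [not_not] using h0
    filter_upwards [hae] with x hx
    exact Set.not_infinite.mp fun hinf => hx (Nat.frequently_atTop_iff_infinite.mpr hinf)
end

section
/- Define the run length of zeros r_n(x) = max{ k ≥ 0 : there exists 0 ≤ i ≤ n−k with ε_{i+1}(x) = ⋯ = ε_{i+k}(x) = 0 }. Then for μ-almost all x ∈ [0,1), limsup_{n→∞} log r_n(x) / log n ≤ α. -/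
open MeasureTheory Filter Real Set

/-- The longest run of zero digits among ε₁(x),…,εₙ(x), where εₖ(x) = 0 iff T^[k-1] x ∈ [0,1/2). -/
noncomputable def runZero (α : ℝ) (n : ℕ) (x : ℝ) : ℕ :=
  sSup {k | ∃ i, i + k ≤ n ∧ ∀ j < k, (T α)^[i + j] x < 1/2}

/-- The longest run of one digits among ε₁(x),…,εₙ(x), where εₖ(x) = 1 iff T^[k-1] x ∈ [1/2,1). -/
noncomputable def runOne (α : ℝ) (n : ℕ) (x : ℝ) : ℕ :=
  sSup {k | ∃ i, i + k ≤ n ∧ ∀ j < k, 1/2 ≤ (T α)^[i + j] x}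

lemma measurable_T {α : ℝ} (hα0 : 0 < α) : Measurable (T α) := by
  unfold T
  have hc : Continuous fun x : ℝ => x * (1 + 2 ^ α * x ^ α) :=
    continuous_id.mul (continuous_const.add (continuous_const.mul
      (continuous_id.rpow_const fun x => Or.inr hα0.le)))
  exact Measurable.ite (measurableSet_lt measurable_id measurable_const)
    hc.measurable ((measurable_id.const_mul 2).sub measurable_const)

lemma T_left (α : ℝ) {x : ℝ} (hx : x < 1/2) : T α x = x * (1 + 2 ^ α * x ^ α) := if_pos hx

lemma T_pos (α : ℝ) (hα0 : 0 < α) {x : ℝ} (h0 : 0 < x) (h1 : x < 1/2) : 0 < T α x := by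
  rw [T_left α h1]
  have : (0:ℝ) < 2 ^ α * x ^ α := by positivity
  nlinarith

lemma keyA {α : ℝ} (hα0 : 0 < α) (hα1 : α < 1) {y : ℝ} (h0 : 0 < y) (h1 : y < 1/2) :
    (T α y) ^ (-α) + α * 2 ^ (α - 1) ≤ y ^ (-α) := by
  set t : ℝ := 2 ^ α * y ^ α with ht
  have ht0 : 0 < t := by positivity
  have ht1 : t ≤ 1 := by
    have : y ^ α ≤ (1/2 : ℝ) ^ α := Real.rpow_le_rpow h0.le h1.le hα0.le
    calc t ≤ 2 ^ α * (1/2 : ℝ) ^ α := by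
            exact mul_le_mul_of_nonneg_left this (by positivity)
      _ = (2 * (1/2) : ℝ) ^ α := (Real.mul_rpow (by norm_num) (by norm_num)).symm
      _ = 1 := by norm_num
  have hTy : T α y = y * (1 + t) := T_left α h1
  have h1t : (0:ℝ) < 1 + t := by linarith
  -- (1+t)^(-α) ≤ 1 - α * t/(1+t)
  have hu : (1 + t)⁻¹ ^ α ≤ α * (1 + t)⁻¹ + (1 - α) := by
    have := Real.geom_mean_le_arith_mean2_weighted hα0.le (by linarith : (0:ℝ) ≤ 1 - α)
      (by positivity : (0:ℝ) ≤ (1+t)⁻¹) (zero_le_one) (by ring)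
    simpa [Real.one_rpow] using this
  have hinv : (1 + t) ^ (-α) = (1 + t)⁻¹ ^ α := by
    rw [Real.rpow_neg h1t.le, Real.inv_rpow h1t.le]
  have hfrac : α * (1+t)⁻¹ + (1 - α) = 1 - α * (t / (1+t)) := by
    field_simp
    ring
  have key : (T α y) ^ (-α) ≤ y ^ (-α) * (1 - α * (t / (1+t))) := by
    rw [hTy, Real.mul_rpow h0.le h1t.le, hinv]
    exact mul_le_mul_of_nonneg_left (hu.trans_eq hfrac) (by positivity)
  have hyt : y ^ (-α) * t = 2 ^ α := by
    rw [ht, ← mul_assoc, mul_comm (y ^ (-α))]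
    rw [mul_assoc, ← Real.rpow_add h0]
    simp
  have h2 : y ^ (-α) * (α * (t / (1+t))) ≥ α * 2 ^ (α - 1) := by
    have e : y ^ (-α) * (α * (t / (1+t))) = α * (2 ^ α / (1+t)) := by
      field_simp
      nlinarith [hyt]
    rw [e]
    have : (2:ℝ) ^ α / (1+t) ≥ 2 ^ α / 2 := by
      rw [ge_iff_le, div_le_div_iff₀ (by norm_num) h1t]
      have : (0:ℝ) < 2 ^ α := by positivity
      nlinarith
    have h2a : (2:ℝ) ^ α / 2 = 2 ^ (α - 1) := by
      rw [Real.rpow_sub (by norm_num), Real.rpow_one]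
    nlinarith [this, h2a]
  nlinarith [key, h2]

lemma keyB {α : ℝ} (hα0 : 0 < α) (hα1 : α < 1) {x : ℝ} (h0 : 0 < x) :
    ∀ {k : ℕ}, (∀ j < k, (T α)^[j] x < 1/2) → (k : ℝ) * (α * 2 ^ (α - 1)) ≤ x ^ (-α) := by
  intro k
  induction k generalizing x with
  | zero => intro _; simpa using Real.rpow_nonneg h0.le (-α)
  | succ k ih =>
    intro hrun
    have hx12 : x < 1/2 := by simpa using hrun 0 (Nat.succ_pos k)
    have hTx : 0 < T α x := T_pos α hα0 h0 hx12
    have hrun' : ∀ j < k, (T α)^[j] (T α x) < 1/2 := by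
      intro j hj
      have := hrun (j+1) (by omega)
      rwa [Function.iterate_succ_apply] at this
    have h1 := ih hTx hrun'
    have h2 := keyA hα0 hα1 h0 hx12
    push_cast
    nlinarith

lemma run_le {α : ℝ} (hα0 : 0 < α) (hα1 : α < 1) {x : ℝ} (h0 : 0 ≤ x) {k : ℕ} (hk : 1 ≤ k)
    (hrun : ∀ j < k, (T α)^[j] x < 1/2) :
    x ≤ ((k : ℝ) * (α * 2 ^ (α - 1))) ^ (-1/α) := by
  have hkc : (0:ℝ) < (k : ℝ) * (α * 2 ^ (α - 1)) := by
    have : (0:ℝ) < (k:ℝ) := by exact_mod_cast hk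
    positivity
  rcases eq_or_lt_of_le h0 with h | h
  · rw [← h]; exact Real.rpow_nonneg hkc.le _
  · have hB := keyB hα0 hα1 h hrun
    have := Real.rpow_le_rpow_of_nonpos hkc hB (by
      have h1 : 0 < 1/α := by positivity
      rw [neg_div]
      linarith : -1/α ≤ 0)
    calc x = (x ^ (-α)) ^ (-1/α) := by
            rw [← Real.rpow_mul h.le]
            rw [show (-α) * (-1/α) = 1 by field_simp, Real.rpow_one]
      _ ≤ ((k : ℝ) * (α * 2 ^ (α - 1))) ^ (-1/α) := this

lemma exists_run {α : ℝ} {n k : ℕ} {x : ℝ} (hle : k ≤ runZero α n x) :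
    ∃ i, i + k ≤ n ∧ ∀ j < k, (T α)^[i + j] x < 1/2 := by
  set S := {k | ∃ i, i + k ≤ n ∧ ∀ j < k, (T α)^[i + j] x < 1/2} with hS
  have hne : S.Nonempty := ⟨0, 0, by simpa using Nat.zero_le n⟩
  have hbdd : BddAbove S := by
    refine ⟨n, fun m hm => ?_⟩
    obtain ⟨i, hi, -⟩ := hm
    omega
  have hmem : runZero α n x ∈ S := Nat.sSup_mem hne hbdd
  obtain ⟨i, hi, hrun⟩ := hmem
  exact ⟨i, by omega, fun j hj => hrun j (by omega)⟩

lemma run_cases {α : ℝ} {n k : ℕ} {x : ℝ} (hle : k ≤ runZero α n x) :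
    (∀ j < k, (T α)^[j] x < 1/2) ∨
      ∃ i < n, 1/2 ≤ (T α)^[i] x ∧ ∀ j < k, (T α)^[j] (T α ((T α)^[i] x)) < 1/2 := by
  obtain ⟨i0, hi0, hrun0⟩ := exists_run hle
  have hex : ∃ i, i + k ≤ n ∧ ∀ j < k, (T α)^[i + j] x < 1/2 := ⟨i0, hi0, hrun0⟩
  classical
  obtain ⟨hik, hruni⟩ := Nat.find_spec hex
  rcases Nat.eq_zero_or_pos (Nat.find hex) with h0 | hpos
  · left; rw [h0] at hruni; intro j hj; simpa using hruni j hj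
  · right
    obtain ⟨i', hfind⟩ : ∃ i', Nat.find hex = i' + 1 := ⟨Nat.find hex - 1, by omega⟩
    rw [hfind] at hik hruni
    have hmin := Nat.find_min hex (m := i') (by omega)
    refine ⟨i', by omega, ?_, ?_⟩
    · by_contra hlt
      push_neg at hlt
      apply hmin
      refine ⟨by omega, fun j hj => ?_⟩
      rcases Nat.eq_zero_or_pos j with rfl | hj0
      · simpa using hlt
      · obtain ⟨j', rfl⟩ : ∃ j', j = j' + 1 := ⟨j - 1, by omega⟩
        have := hruni j' (by omega)
        have e : i' + (j' + 1) = i' + 1 + j' := by omega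
        rw [e]
        exact this
    · intro j hj
      have := hruni j hj
      rwa [show i' + 1 + j = j + 1 + i' by omega, Function.iterate_add_apply,
        Function.iterate_succ_apply] at this

lemma mu_apply {μ : Measure ℝ} {h : ℝ → ℝ}
    (hμ : μ = (volume.restrict (Set.Ico 0 1)).withDensity (fun x => ENNReal.ofReal (h x)))
    {t : Set ℝ} (ht : MeasurableSet t) :
    μ t = ∫⁻ x in t ∩ Set.Ico 0 1, ENNReal.ofReal (h x) := by
  rw [hμ, withDensity_apply _ ht, Measure.restrict_restrict ht]

lemma mu_left {α C δ a : ℝ} {μ : Measure ℝ} {h : ℝ → ℝ}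
    (hμ : μ = (volume.restrict (Set.Ico 0 1)).withDensity (fun x => ENNReal.ofReal (h x)))
    (hα0 : 0 < α) (hα1 : α < 1) (hC : 0 ≤ C)
    (hb : ∀ x ∈ Set.Ioc (0:ℝ) δ, h x ≤ C * x ^ (-α))
    (ha : 0 < a) (haδ : a ≤ δ) {t : Set ℝ} (ht : MeasurableSet t)
    (hsub : t ∩ Set.Ico 0 1 ⊆ Set.Icc 0 a) :
    μ t ≤ ENNReal.ofReal (C * (a ^ (1 - α) / (1 - α))) := by
  rw [mu_apply hμ ht]
  have step1 : ∫⁻ x in t ∩ Set.Ico 0 1, ENNReal.ofReal (h x)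
      ≤ ∫⁻ x in Set.Ioc 0 a, ENNReal.ofReal (h x) := by
    calc ∫⁻ x in t ∩ Set.Ico 0 1, ENNReal.ofReal (h x)
        ≤ ∫⁻ x in Set.Icc 0 a, ENNReal.ofReal (h x) := lintegral_mono_set hsub
      _ = ∫⁻ x in Set.Ioc 0 a, ENNReal.ofReal (h x) :=
          (setLIntegral_congr (Ioc_ae_eq_Icc (μ := volume))).symm
  have step2 : ∫⁻ x in Set.Ioc 0 a, ENNReal.ofReal (h x)
      ≤ ∫⁻ x in Set.Ioc 0 a, ENNReal.ofReal (C * x ^ (-α)) := by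
    apply setLIntegral_mono' measurableSet_Ioc
    intro x hx
    exact ENNReal.ofReal_le_ofReal (hb x ⟨hx.1, hx.2.trans haδ⟩)
  have hint : IntegrableOn (fun x : ℝ => C * x ^ (-α)) (Set.Ioc 0 a) := by
    have := (intervalIntegral.intervalIntegrable_rpow' (show (-1:ℝ) < -α by linarith) (a := 0) (b := a)).1
    exact this.const_mul C
  have step3 : ∫⁻ x in Set.Ioc 0 a, ENNReal.ofReal (C * x ^ (-α))
      = ENNReal.ofReal (∫ x in Set.Ioc 0 a, C * x ^ (-α)) := by
    rw [ofReal_integral_eq_lintegral_ofReal hint]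
    exact ae_restrict_of_forall_mem measurableSet_Ioc fun x hx => mul_nonneg hC (Real.rpow_nonneg hx.1.le _)
  have step4 : ∫ x in Set.Ioc 0 a, C * x ^ (-α) = C * (a ^ (1 - α) / (1 - α)) := by
    rw [MeasureTheory.integral_const_mul]
    congr 1
    rw [← intervalIntegral.integral_of_le ha.le]
    rw [integral_rpow (Or.inl (by linarith))]
    rw [Real.zero_rpow (by linarith : -α + 1 ≠ 0)]
    norm_num
    ring_nf
  calc _ ≤ ∫⁻ x in Set.Ioc 0 a, ENNReal.ofReal (C * x ^ (-α)) := step1.trans step2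
    _ = _ := by rw [step3, step4]

lemma mu_right {M b : ℝ} {μ : Measure ℝ} {h : ℝ → ℝ}
    (hμ : μ = (volume.restrict (Set.Ico 0 1)).withDensity (fun x => ENNReal.ofReal (h x)))
    (hM0 : 0 ≤ M) (hM : ∀ x ∈ Set.Ico (1/2 : ℝ) 1, h x ≤ M)
    (hb12 : 1/2 ≤ b) {t : Set ℝ} (ht : MeasurableSet t)
    (hsub : t ∩ Set.Ico 0 1 ⊆ Set.Icc (1/2) b) :
    μ t ≤ ENNReal.ofReal (M * (b - 1/2)) := by
  rw [mu_apply hμ ht]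
  have hms : MeasurableSet (t ∩ Set.Ico 0 1) := ht.inter measurableSet_Ico
  calc ∫⁻ x in t ∩ Set.Ico 0 1, ENNReal.ofReal (h x)
      ≤ ∫⁻ _ in t ∩ Set.Ico 0 1, ENNReal.ofReal M := by
        apply setLIntegral_mono' hms
        intro x hx
        exact ENNReal.ofReal_le_ofReal (hM x ⟨(hsub hx).1, hx.2.2⟩)
    _ = ENNReal.ofReal M * volume (t ∩ Set.Ico 0 1) := setLIntegral_const _ _
    _ ≤ ENNReal.ofReal M * volume (Set.Icc (1/2 : ℝ) b) := by
        exact mul_le_mul_right (measure_mono hsub) _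
    _ = ENNReal.ofReal M * ENNReal.ofReal (b - 1/2) := by rw [Real.volume_Icc]
    _ = ENNReal.ofReal (M * (b - 1/2)) := (ENNReal.ofReal_mul hM0).symm

lemma mu_run {α C δ M : ℝ} {μ : Measure ℝ} {h : ℝ → ℝ}
    (hμ : μ = (volume.restrict (Set.Ico 0 1)).withDensity (fun x => ENNReal.ofReal (h x)))
    (hα0 : 0 < α) (hα1 : α < 1) (hC : 0 ≤ C)
    (hb : ∀ x ∈ Set.Ioc (0:ℝ) δ, h x ≤ C * x ^ (-α))
    (hM0 : 0 ≤ M) (hM : ∀ x ∈ Set.Ico (1/2 : ℝ) 1, h x ≤ M)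
    (hTinv : MeasurePreserving (T α) μ μ)
    {n k : ℕ} (hk : 1 ≤ k)
    (haδ : (((k:ℝ) * (α * 2 ^ (α-1))) ^ (-1/α)) ≤ δ) :
    μ {x | k ≤ runZero α n x} ≤
      ENNReal.ofReal (C * (((((k:ℝ) * (α * 2 ^ (α-1))) ^ (-1/α)) ^ (1-α)) / (1-α)))
      + n * ENNReal.ofReal (M * ((((k:ℝ) * (α * 2 ^ (α-1))) ^ (-1/α)) / 2)) := by
  set a : ℝ := ((k:ℝ) * (α * 2 ^ (α-1))) ^ (-1/α) with hadef
  have hk0 : (0:ℝ) < (k:ℝ) := by exact_mod_cast hk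
  have ha : 0 < a := by
    apply Real.rpow_pos_of_pos
    positivity
  set A : Set ℝ := ⋂ j ∈ Finset.range k, ((T α)^[j]) ⁻¹' (Set.Iio (1/2)) with hAdef
  have hmemA : ∀ y : ℝ, y ∈ A ↔ ∀ j < k, (T α)^[j] y < 1/2 := by
    intro y
    simp [hAdef, Set.mem_iInter]
  have hAm : MeasurableSet A := by
    apply MeasurableSet.biInter (Finset.range k).countable_toSet
    intro j _
    exact ((measurable_T hα0).iterate j) measurableSet_Iio
  set B : Set ℝ := Set.Ici (1/2 : ℝ) ∩ (T α) ⁻¹' A with hBdef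
  have hBm : MeasurableSet B := measurableSet_Ici.inter ((measurable_T hα0) hAm)
  -- inclusion
  have hincl : {x | k ≤ runZero α n x} ⊆ A ∪ ⋃ i ∈ Finset.range n, ((T α)^[i]) ⁻¹' B := by
    intro x hx
    rcases run_cases hx with hA | ⟨i, hi, h12, hrun⟩
    · exact Or.inl ((hmemA x).2 hA)
    · refine Or.inr ?_
      refine Set.mem_biUnion (Finset.mem_range.2 hi) ?_
      refine ⟨h12, (hmemA _).2 ?_⟩
      exact hrun
  -- subset bounds
  have hAsub : A ∩ Set.Ico 0 1 ⊆ Set.Icc 0 a := by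
    rintro x ⟨hxA, hx0, -⟩
    exact ⟨hx0, run_le hα0 hα1 hx0 hk ((hmemA x).1 hxA)⟩
  have hBsub : B ∩ Set.Ico 0 1 ⊆ Set.Icc (1/2) ((1 + a)/2) := by
    rintro x ⟨⟨hx12, hxT⟩, -, hx1⟩
    have hx12' : (1/2 : ℝ) ≤ x := hx12
    have hT : T α x = 2 * x - 1 := if_neg (by simp only [not_lt]; exact hx12')
    have h0T : (0:ℝ) ≤ 2 * x - 1 := by linarith
    have hrun := (hmemA _).1 hxT
    rw [hT] at hrun
    have := run_le hα0 hα1 h0T hk hrun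
    exact ⟨hx12', by linarith⟩
  have hμA : μ A ≤ ENNReal.ofReal (C * ((a ^ (1-α)) / (1-α))) :=
    mu_left hμ hα0 hα1 hC hb ha haδ hAm hAsub
  have hμB : μ B ≤ ENNReal.ofReal (M * (a / 2)) := by
    have := mu_right hμ hM0 hM (by linarith : (1/2:ℝ) ≤ (1+a)/2) hBm hBsub
    convert this using 2
    ring
  calc μ {x | k ≤ runZero α n x}
      ≤ μ (A ∪ ⋃ i ∈ Finset.range n, ((T α)^[i]) ⁻¹' B) := measure_mono hincl
    _ ≤ μ A + μ (⋃ i ∈ Finset.range n, ((T α)^[i]) ⁻¹' B) := measure_union_le _ _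
    _ ≤ μ A + ∑ i ∈ Finset.range n, μ (((T α)^[i]) ⁻¹' B) := by
        exact add_le_add_right (measure_biUnion_finset_le _ _) _
    _ = μ A + n * μ B := by
        congr 1
        rw [Finset.sum_congr rfl fun i _ => (hTinv.iterate i).measure_preimage
          hBm.nullMeasurableSet]
        simp [mul_comm]
    _ ≤ _ := add_le_add hμA (mul_le_mul_right hμB _)

lemma runZero_mono (α : ℝ) {n n' : ℕ} (hnn : n ≤ n') (x : ℝ) :
    runZero α n x ≤ runZero α n' x := by
  set S := {k | ∃ i, i + k ≤ n ∧ ∀ j < k, (T α)^[i + j] x < 1/2} with hS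
  have hne : S.Nonempty := ⟨0, 0, by simpa using Nat.zero_le n⟩
  have hbdd : BddAbove S := ⟨n, fun m hm => by obtain ⟨i, hi, -⟩ := hm; omega⟩
  have hmem : runZero α n x ∈ S := Nat.sSup_mem hne hbdd
  obtain ⟨i, hi, hrun⟩ := hmem
  have hbdd' : BddAbove {k | ∃ i, i + k ≤ n' ∧ ∀ j < k, (T α)^[i + j] x < 1/2} :=
    ⟨n', fun m hm => by obtain ⟨i, hi, -⟩ := hm; omega⟩
  exact le_csSup hbdd' ⟨i, by omega, hrun⟩

lemma main_ev {α β c : ℝ} (hα0 : 0 < α) (hα1 : α < 1) (hβ : α < β) (hc : 0 < c)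
    (μ : Measure ℝ) [IsProbabilityMeasure μ]
    (hinv : MeasurePreserving (T α) μ μ)
    (h : ℝ → ℝ)
    (hμ : μ = (volume.restrict (Set.Ico 0 1)).withDensity (fun x => ENNReal.ofReal (h x)))
    (hlim : Tendsto (fun x => x ^ α * h x) (nhdsWithin 0 (Set.Ioi 0)) (nhds c))
    (hbd : ∀ b ∈ Set.Ioo (0:ℝ) 1, ∃ m M : ℝ, 0 < m ∧
      ∀ x ∈ Set.Ico b (1:ℝ), m ≤ h x ∧ h x ≤ M) :
    ∀ᵐ x ∂μ, ∀ᶠ n : ℕ in Filter.atTop, (runZero α n x : ℝ) ≤ (n : ℝ) ^ β := by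
  -- density bound near 0
  have hev : ∀ᶠ x in nhdsWithin 0 (Set.Ioi 0), x ^ α * h x < c + 1 :=
    hlim.eventually_lt_const (by linarith)
  obtain ⟨δ0, hδ0, hδsub⟩ := mem_nhdsGT_iff_exists_Ioo_subset.1 hev
  have hδ0' : (0:ℝ) < δ0 := hδ0
  set δ : ℝ := δ0 / 2 with hδdef
  have hδ : 0 < δ := by positivity
  have hb : ∀ x ∈ Set.Ioc (0:ℝ) δ, h x ≤ (c+1) * x ^ (-α) := by
    intro x hx
    have hx0 : 0 < x := hx.1
    have h1 : x ^ α * h x < c + 1 := hδsub ⟨hx0, lt_of_le_of_lt hx.2 (by linarith)⟩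
    have hxa : (0:ℝ) < x ^ (-α) := Real.rpow_pos_of_pos hx0 _
    have e : h x = x ^ (-α) * (x ^ α * h x) := by
      rw [← mul_assoc, ← Real.rpow_add hx0]
      simp
    rw [e, mul_comm ((c:ℝ)+1)]
    exact mul_le_mul_of_nonneg_left h1.le hxa.le
  -- density bound on the right
  obtain ⟨m', M, hm', hmM⟩ := hbd (1/2) ⟨by norm_num, by norm_num⟩
  have hM : ∀ x ∈ Set.Ico (1/2 : ℝ) 1, h x ≤ M := fun x hx => (hmM x hx).2
  have hM0 : 0 ≤ M := by
    have := hmM (1/2) ⟨le_refl _, by norm_num⟩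
    linarith [this.1, this.2]
  -- constants
  set c0 : ℝ := α * 2 ^ (α - 1) with hc0def
  have hc0 : 0 < c0 := by positivity
  set c0inv : ℝ := c0 ^ (-1/α) with hc0inv
  have hc0inv0 : 0 < c0inv := Real.rpow_pos_of_pos hc0 _
  set r : ℝ := (2:ℝ) ^ (-(β/α)) with hrdef
  have hr0 : 0 < r := Real.rpow_pos_of_pos two_pos _
  have hβ0 : 0 < β := lt_trans hα0 hβ
  have hr1 : r < 1 := Real.rpow_lt_one_of_one_lt_of_neg one_lt_two (by
    have : 0 < β/α := by positivity
    linarith)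
  set k_ : ℕ → ℕ := fun m => ⌈(2:ℝ) ^ ((m:ℝ) * β)⌉₊ with hkdef
  have hk1 : ∀ m, 1 ≤ k_ m := fun m => Nat.ceil_pos.2 (Real.rpow_pos_of_pos two_pos _)
  set a_ : ℕ → ℝ := fun m => ((k_ m : ℝ) * c0) ^ (-1/α) with hadef
  have hapos : ∀ m, 0 < a_ m := by
    intro m
    have : (0:ℝ) < (k_ m : ℝ) := by exact_mod_cast hk1 m
    exact Real.rpow_pos_of_pos (by positivity) _
  have habd : ∀ m, a_ m ≤ c0inv * r ^ m := by
    intro m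
    have hle : (2:ℝ) ^ ((m:ℝ) * β) ≤ (k_ m : ℝ) := Nat.le_ceil _
    have hp : (0:ℝ) < (2:ℝ) ^ ((m:ℝ) * β) := Real.rpow_pos_of_pos two_pos _
    have step : a_ m ≤ ((2:ℝ) ^ ((m:ℝ) * β) * c0) ^ (-1/α) := by
      apply Real.rpow_le_rpow_of_nonpos (by positivity)
        (mul_le_mul_of_nonneg_right hle hc0.le)
      rw [neg_div]
      have : 0 < 1/α := by positivity
      linarith
    have e1 : ((2:ℝ) ^ ((m:ℝ) * β) * c0) ^ (-1/α)
        = ((2:ℝ) ^ ((m:ℝ) * β)) ^ (-1/α) * c0inv :=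
      Real.mul_rpow hp.le hc0.le
    have e2 : ((2:ℝ) ^ ((m:ℝ) * β)) ^ (-1/α) = r ^ m := by
      rw [← Real.rpow_natCast r m, hrdef, ← Real.rpow_mul (by norm_num : (0:ℝ) ≤ 2),
        ← Real.rpow_mul (by norm_num : (0:ℝ) ≤ 2)]
      congr 1
      ring
    calc a_ m ≤ ((2:ℝ) ^ ((m:ℝ) * β) * c0) ^ (-1/α) := step
      _ = r ^ m * c0inv := by rw [e1, e2]
      _ = c0inv * r ^ m := mul_comm _ _
  -- choose m0 with a_ m ≤ δ for m ≥ m0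
  have htd : Tendsto (fun m : ℕ => c0inv * r ^ m) atTop (nhds 0) := by
    have := (tendsto_pow_atTop_nhds_zero_of_lt_one hr0.le hr1).const_mul c0inv
    simpa using this
  obtain ⟨m0, hm0⟩ := eventually_atTop.1 ((htd.eventually_lt_const hδ).mono
    (fun m hm => le_of_lt hm))
  have haδ : ∀ m, m0 ≤ m → a_ m ≤ δ := fun m hm => (habd m).trans (hm0 m hm)
  -- the bad sets
  set G : ℕ → Set ℝ := fun m => {x | k_ (m + m0) ≤ runZero α (2 ^ (m + m0 + 1)) x} with hGdef
  -- geometric bounds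
  set s1 : ℝ := r ^ (1 - α) with hs1def
  have hs10 : 0 < s1 := Real.rpow_pos_of_pos hr0 _
  have hs11 : s1 < 1 := Real.rpow_lt_one hr0.le hr1 (by linarith)
  set s2 : ℝ := 2 * r with hs2def
  have hs20 : 0 < s2 := by positivity
  have hs21 : s2 < 1 := by
    have : s2 = (2:ℝ) ^ (1 - β/α) := by
      rw [hs2def, hrdef, show (1:ℝ) - β/α = 1 + (-(β/α)) by ring,
        Real.rpow_add two_pos, Real.rpow_one]
    rw [this]
    apply Real.rpow_lt_one_of_one_lt_of_neg one_lt_two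
    have : 1 < β/α := (one_lt_div hα0).2 hβ
    linarith
  set q : ℕ → ℝ := fun m =>
    ((c+1)/(1-α) * c0inv ^ (1-α)) * s1 ^ m + (M * c0inv) * s2 ^ m with hqdef
  have hq0 : ∀ m, 0 ≤ q m := by
    intro m
    have h1 : (0:ℝ) ≤ (c+1)/(1-α) * c0inv ^ (1-α) := by
      apply mul_nonneg
      · apply div_nonneg (by linarith) (by linarith)
      · exact Real.rpow_nonneg hc0inv0.le _
    have h2 : (0:ℝ) ≤ M * c0inv := mul_nonneg hM0 hc0inv0.le
    positivity
  have hqsum : Summable q := by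
    apply Summable.add
    · exact (summable_geometric_of_lt_one hs10.le hs11).mul_left _
    · exact (summable_geometric_of_lt_one hs20.le hs21).mul_left _
  -- measure bound on G m
  have hGbd : ∀ m, μ (G m) ≤ ENNReal.ofReal (q m) := by
    intro m
    set m1 := m + m0 with hm1def
    have hrun := mu_run hμ hα0 hα1 (by linarith : (0:ℝ) ≤ c+1) hb hM0 hM hinv
      (n := 2 ^ (m1 + 1)) (hk1 m1) (haδ m1 (by omega))
    have hq : ENNReal.ofReal ((c+1) * ((a_ m1 ^ (1-α)) / (1-α)))
        + ((2 ^ (m1+1) : ℕ) : ENNReal) * ENNReal.ofReal (M * (a_ m1 / 2))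
        ≤ ENNReal.ofReal (q m) := by
      have h1 : (c+1) * ((a_ m1 ^ (1-α)) / (1-α))
          ≤ ((c+1)/(1-α) * c0inv ^ (1-α)) * s1 ^ m := by
        have f2 : (a_ m1) ^ (1-α) ≤ c0inv ^ (1-α) * s1 ^ m := by
          have e3 : (r ^ m1) ^ (1-α) = s1 ^ m1 := by
            rw [hs1def, ← Real.rpow_natCast r m1,
              ← Real.rpow_natCast ((r : ℝ) ^ ((1:ℝ)-α)) m1,
              ← Real.rpow_mul hr0.le, ← Real.rpow_mul hr0.le]
            congr 1
            ring
          calc (a_ m1) ^ (1-α) ≤ (c0inv * r ^ m1) ^ (1-α) :=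
                Real.rpow_le_rpow (hapos m1).le (habd m1) (by linarith)
            _ = c0inv ^ (1-α) * (r ^ m1) ^ (1-α) :=
                Real.mul_rpow hc0inv0.le (by positivity)
            _ = c0inv ^ (1-α) * s1 ^ m1 := by rw [e3]
            _ ≤ c0inv ^ (1-α) * s1 ^ m := by
                apply mul_le_mul_of_nonneg_left _ (Real.rpow_nonneg hc0inv0.le _)
                exact pow_le_pow_of_le_one hs10.le hs11.le (by omega)
        calc (c+1) * ((a_ m1 ^ (1-α)) / (1-α)) = (c+1)/(1-α) * (a_ m1 ^ (1-α)) := by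
              ring
          _ ≤ (c+1)/(1-α) * (c0inv ^ (1-α) * s1 ^ m) := by
              apply mul_le_mul_of_nonneg_left f2
              apply div_nonneg (by linarith) (by linarith)
          _ = ((c+1)/(1-α) * c0inv ^ (1-α)) * s1 ^ m := by ring
      have h2 : ((2:ℝ) ^ (m1+1)) * (M * (a_ m1 / 2)) ≤ (M * c0inv) * s2 ^ m := by
        have f3 : (2:ℝ) ^ m1 * a_ m1 ≤ c0inv * s2 ^ m := by
          calc (2:ℝ) ^ m1 * a_ m1 ≤ (2:ℝ) ^ m1 * (c0inv * r ^ m1) := by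
                apply mul_le_mul_of_nonneg_left (habd m1) (by positivity)
            _ = c0inv * (2*r) ^ m1 := by rw [mul_pow]; ring
            _ = c0inv * s2 ^ m1 := by rw [hs2def]
            _ ≤ c0inv * s2 ^ m := by
                apply mul_le_mul_of_nonneg_left _ hc0inv0.le
                exact pow_le_pow_of_le_one hs20.le hs21.le (by omega)
        calc ((2:ℝ) ^ (m1+1)) * (M * (a_ m1 / 2)) = M * ((2:ℝ) ^ m1 * a_ m1) := by
              ring
          _ ≤ M * (c0inv * s2 ^ m) := mul_le_mul_of_nonneg_left f3 hM0
          _ = (M * c0inv) * s2 ^ m := by ring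
      have hcast : ((2 ^ (m1+1) : ℕ) : ENNReal) * ENNReal.ofReal (M * (a_ m1 / 2))
          = ENNReal.ofReal (((2:ℝ) ^ (m1+1)) * (M * (a_ m1 / 2))) := by
        rw [← ENNReal.ofReal_natCast, ← ENNReal.ofReal_mul (by positivity)]
        congr 1
        push_cast
        ring
      rw [hcast]
      have t1 : (0:ℝ) ≤ ((c+1)/(1-α) * c0inv ^ (1-α)) * s1 ^ m :=
        mul_nonneg (mul_nonneg (div_nonneg (by linarith) (by linarith))
          (Real.rpow_nonneg hc0inv0.le _)) (pow_nonneg hs10.le _)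
      calc ENNReal.ofReal ((c+1) * ((a_ m1 ^ (1-α)) / (1-α)))
            + ENNReal.ofReal (((2:ℝ) ^ (m1+1)) * (M * (a_ m1 / 2)))
          ≤ ENNReal.ofReal (((c+1)/(1-α) * c0inv ^ (1-α)) * s1 ^ m)
            + ENNReal.ofReal ((M * c0inv) * s2 ^ m) :=
            add_le_add (ENNReal.ofReal_le_ofReal h1) (ENNReal.ofReal_le_ofReal h2)
        _ = ENNReal.ofReal (q m) := by
            rw [hqdef, ENNReal.ofReal_add t1 (mul_nonneg (mul_nonneg hM0 hc0inv0.le)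
              (pow_nonneg hs20.le _))]
    exact hrun.trans hq
  -- Borel-Cantelli
  have hsum : (∑' m, μ (G m)) ≠ ⊤ := by
    have h1 : (∑' m, μ (G m)) ≤ ∑' m, ENNReal.ofReal (q m) := ENNReal.tsum_le_tsum hGbd
    rw [← ENNReal.ofReal_tsum_of_nonneg hq0 hqsum] at h1
    exact ne_top_of_le_ne_top ENNReal.ofReal_ne_top h1
  have hBC := MeasureTheory.ae_eventually_notMem hsum
  filter_upwards [hBC] with x hx
  obtain ⟨mm1, hmm1⟩ := eventually_atTop.1 hx
  rw [eventually_atTop]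
  refine ⟨2 ^ (m0 + mm1) + 1, fun n hn => ?_⟩
  have hp2 : 0 < 2 ^ (m0 + mm1) := Nat.two_pow_pos _
  have hn0 : n ≠ 0 := by omega
  set m := Nat.log 2 n with hmdef
  have hmlow : 2 ^ m ≤ n := Nat.pow_log_le_self 2 hn0
  have hmhigh : n < 2 ^ (m + 1) := Nat.lt_pow_succ_log_self one_lt_two n
  have hmge : m0 + mm1 ≤ m := by
    apply (Nat.le_log_iff_pow_le one_lt_two hn0).2
    omega
  have hxG : x ∉ G (m - m0) := hmm1 (m - m0) (by omega)
  rw [hGdef] at hxG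
  simp only [Set.mem_setOf_eq, not_le] at hxG
  have hmm : m - m0 + m0 = m := by omega
  rw [hmm] at hxG
  -- runZero α n x < k_ m
  have hlt : runZero α n x < k_ m :=
    lt_of_le_of_lt (runZero_mono α (by omega : n ≤ 2 ^ (m+1)) x) hxG
  have hceil : ((k_ m : ℝ)) < (2:ℝ) ^ ((m:ℝ) * β) + 1 :=
    Nat.ceil_lt_add_one (Real.rpow_pos_of_pos two_pos _).le
  have hr1' : (runZero α n x : ℝ) + 1 ≤ (k_ m : ℝ) := by exact_mod_cast hlt
  have hfin : (runZero α n x : ℝ) ≤ (2:ℝ) ^ ((m:ℝ) * β) := by linarith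
  have h2m : (2:ℝ) ^ ((m:ℝ) * β) ≤ (n:ℝ) ^ β := by
    have e : (2:ℝ) ^ ((m:ℝ) * β) = ((2:ℝ) ^ (m:ℕ)) ^ β := by
      rw [← Real.rpow_natCast 2 m, ← Real.rpow_mul (by norm_num)]
    rw [e]
    apply Real.rpow_le_rpow (by positivity) _ hβ0.le
    exact_mod_cast hmlow
  linarith

theorem stmt8 (α : ℝ) (hα0 : 0 < α) (hα1 : α < 1) (c : ℝ) (hc : 0 < c)
    (μ : Measure ℝ) [IsProbabilityMeasure μ]
    (hinv : MeasurePreserving (T α) μ μ) (hac : μ ≪ volume)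
    (h : ℝ → ℝ)
    (hμ : μ = (volume.restrict (Set.Ico 0 1)).withDensity (fun x => ENNReal.ofReal (h x)))
    (hlim : Tendsto (fun x => x ^ α * h x) (nhdsWithin 0 (Set.Ioi 0)) (nhds c))
    (hbd : ∀ b ∈ Set.Ioo (0:ℝ) 1, ∃ m M : ℝ, 0 < m ∧
      ∀ x ∈ Set.Ico b (1:ℝ), m ≤ h x ∧ h x ≤ M) :
    ∀ᵐ x ∂μ, Filter.limsup
      (fun n : ℕ => Real.log (runZero α n x) / Real.log n) atTop ≤ α := by
  have hmain : ∀ j : ℕ, ∀ᵐ x ∂μ,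
      ∀ᶠ n : ℕ in atTop, (runZero α n x : ℝ) ≤ (n:ℝ) ^ (α + 1/((j:ℝ)+1)) := by
    intro j
    apply main_ev hα0 hα1 _ hc μ hinv h hμ hlim hbd
    have : (0:ℝ) < 1/((j:ℝ)+1) := by positivity
    linarith
  have hall := ae_all_iff.2 hmain
  filter_upwards [hall] with x hx
  set u : ℕ → ℝ := fun n => Real.log (runZero α n x) / Real.log n with hu
  have hub : ∀ j : ℕ, Filter.limsup u atTop ≤ α + 1/((j:ℝ)+1) := by
    intro j
    have hβ0 : (0:ℝ) < α + 1/((j:ℝ)+1) := by positivity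
    have hev2 : ∀ᶠ n in atTop, u n ≤ α + 1/((j:ℝ)+1) := by
      filter_upwards [hx j, eventually_ge_atTop 2] with n hn h2
      have hn1 : (1:ℝ) < (n:ℝ) := by exact_mod_cast h2
      have hlogn : 0 < Real.log n := Real.log_pos hn1
      rcases Nat.eq_zero_or_pos (runZero α n x) with h0 | hpos
      · show Real.log (runZero α n x) / Real.log n ≤ _
        rw [h0]
        simp only [Nat.cast_zero, Real.log_zero, zero_div]
        linarith
      · have hk1 : (0:ℝ) < (runZero α n x : ℝ) := by exact_mod_cast hpos
        show Real.log (runZero α n x) / Real.log n ≤ _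
        rw [div_le_iff₀ hlogn]
        calc Real.log (runZero α n x) ≤ Real.log ((n:ℝ) ^ (α + 1/((j:ℝ)+1))) :=
              Real.log_le_log hk1 hn
          _ = (α + 1/((j:ℝ)+1)) * Real.log n := Real.log_rpow (by linarith) _
    have hcb : IsCoboundedUnder (· ≤ ·) atTop u :=
      isCoboundedUnder_le_of_le atTop (x := 0)
        (fun n => div_nonneg (Real.log_natCast_nonneg _) (Real.log_natCast_nonneg _))
    exact limsup_le_of_le hcb hev2
  by_contra hcon
  push_neg at hcon
  obtain ⟨j, hj⟩ := exists_nat_one_div_lt (by linarith : (0:ℝ) < Filter.limsup u atTop - α)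
  have := hub j
  linarith
end

section
/- Define R_n(x) as the longest run of one digits among ε_1(x),…,ε_n(x). Then for μ-almost all x ∈ [0,1), limsup_{n→∞} R_n(x) / log₂ n ≤ 1. -/
open MeasureTheory Filter Real Set Topology
open scoped ENNReal NNReal

lemma T_apply_of_half_le {α x : ℝ} (hx : (1:ℝ)/2 ≤ x) : T α x = 2*x - 1 := by
  rw [T, if_neg (not_lt.2 hx)]

/-- If the first k iterates (including y itself) are ≥ 1/2 then y ≥ 1 - 2⁻ᵏ. -/
lemma runB (α : ℝ) : ∀ (k : ℕ), 1 ≤ k → ∀ (y : ℝ),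
    (∀ j < k, (1:ℝ)/2 ≤ (T α)^[j] y) → 1 - (1/2:ℝ)^k ≤ y := by
  intro k
  induction k with
  | zero => intro h; omega
  | succ k ih =>
    intro _ y h
    have h0 : (1:ℝ)/2 ≤ y := by simpa using h 0 (Nat.succ_pos k)
    rcases Nat.eq_zero_or_pos k with hk | hk
    · subst hk; norm_num; linarith
    · have hT : T α y = 2*y - 1 := T_apply_of_half_le h0
      have h1 : ∀ j < k, (1:ℝ)/2 ≤ (T α)^[j] (T α y) := by
        intro j hj
        have := h (j+1) (by omega)
        rwa [Function.iterate_succ_apply] at this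
      have h2 := ih hk (T α y) h1
      rw [hT] at h2
      have hp : (1/2:ℝ)^(k+1) = (1/2:ℝ)^k * (1/2) := pow_succ _ _
      linarith

/-- Points ≥ 1 never come back, hence carry no mass. -/
lemma mu_Ici_one (α : ℝ) (μ : Measure ℝ) [IsProbabilityMeasure μ]
    (hinv : MeasurePreserving (T α) μ μ) (hac : μ ≪ volume) :
    μ (Ici (1:ℝ)) = 0 := by
  have key : ∀ δ : ℝ, 0 < δ → μ (Ici (1+δ)) = 0 := by
    intro δ hδ
    have step : ∀ c : ℝ, 0 < c → μ (Ici (1+c)) ≤ μ (Ici (1+2*c)) := by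
      intro c hc
      have hsub : Ici (1+c) ⊆ T α ⁻¹' (Ici (1+2*c)) := by
        intro x hx
        simp only [mem_Ici, mem_preimage] at *
        rw [T_apply_of_half_le (by linarith)]
        linarith
      calc μ (Ici (1+c)) ≤ μ (T α ⁻¹' (Ici (1+2*c))) := measure_mono hsub
        _ = μ (Ici (1+2*c)) := hinv.measure_preimage measurableSet_Ici.nullMeasurableSet
    have iter : ∀ n : ℕ, μ (Ici (1+δ)) ≤ μ (Ici (1 + 2^n * δ)) := by
      intro n
      induction n with
      | zero => simp
      | succ n ih =>
        refine ih.trans ?_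
        have h2 := step (2^n * δ) (by positivity)
        have he : 1 + 2*(2^n*δ) = 1 + 2^(n+1)*δ := by ring
        rwa [he] at h2
    have hanti : Antitone (fun n : ℕ => Ici (1 + 2^n * δ)) := by
      intro a b hab
      apply Ici_subset_Ici.2
      have : (2:ℝ)^a ≤ 2^b := pow_le_pow_right₀ (by norm_num) hab
      nlinarith
    have hten : Tendsto (fun n : ℕ => μ (Ici (1 + 2^n * δ))) atTop
        (𝓝 (μ (⋂ n : ℕ, Ici (1 + 2^n * δ)))) :=
      tendsto_measure_iInter_atTop (fun n => measurableSet_Ici.nullMeasurableSet)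
        hanti ⟨0, measure_ne_top μ _⟩
    have hempty : (⋂ n : ℕ, Ici (1 + 2^n * δ)) = ∅ := by
      ext x
      simp only [mem_iInter, mem_Ici, mem_empty_iff_false, iff_false]
      push_neg
      obtain ⟨n, hn⟩ := pow_unbounded_of_one_lt ((x-1)/δ) (show (1:ℝ) < 2 by norm_num)
      refine ⟨n, ?_⟩
      rw [div_lt_iff₀ hδ] at hn
      linarith
    rw [hempty, measure_empty] at hten
    exact le_antisymm (ge_of_tendsto hten (Eventually.of_forall iter)) zero_le
  have hIoi : μ (Ioi (1:ℝ)) = 0 := by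
    have hsub : Ioi (1:ℝ) ⊆ ⋃ n : ℕ, Ici (1 + 1/((n:ℝ)+1)) := by
      intro x hx
      obtain ⟨n, hn⟩ := exists_nat_one_div_lt (show (0:ℝ) < x - 1 by simpa using hx)
      exact mem_iUnion.2 ⟨n, by simp only [mem_Ici]; linarith⟩
    exact measure_mono_null hsub (measure_iUnion_null fun n => key _ (by positivity))
  have h1 : μ {(1:ℝ)} = 0 := hac Real.volume_singleton
  have hdecomp : Ici (1:ℝ) ⊆ {(1:ℝ)} ∪ Ioi 1 := by
    intro x hx
    rcases eq_or_lt_of_le (mem_Ici.1 hx) with h | h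
    · exact Or.inl (by simp [← h])
    · exact Or.inr h
  exact measure_mono_null hdecomp (le_antisymm ((measure_union_le _ _).trans (by simp [h1, hIoi])) zero_le)

/-- Bound on the measure of a left-closed interval touching 1. -/
lemma mu_Ico (μ : Measure ℝ) (Ct : ℝ) (hCt : 0 < Ct)
    (hμleb : ∀ b c : ℝ, Set.Icc b c ⊆ Set.Ico (1/2:ℝ) 1 →
      μ (Set.Icc b c) ≤ ENNReal.ofReal (Ct * (c - b)))
    {a : ℝ} (ha : 1/2 ≤ a) (ha1 : a < 1) :
    μ (Ico a 1) ≤ ENNReal.ofReal (Ct * (1 - a)) := by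
  have h1a : (0:ℝ) < 1 - a := by linarith
  have hmono : Monotone (fun n : ℕ => Icc a (1 - (1-a)/((n:ℝ)+1))) := by
    intro n m hnm
    apply Icc_subset_Icc le_rfl
    have hmn : ((n:ℝ)+1) ≤ (m:ℝ)+1 := by exact_mod_cast Nat.succ_le_succ hnm
    have h2 : (1-a)/((m:ℝ)+1) ≤ (1-a)/((n:ℝ)+1) :=
      div_le_div_of_nonneg_left h1a.le (by positivity) hmn
    linarith
  have hun : Ico a 1 = ⋃ n : ℕ, Icc a (1 - (1-a)/((n:ℝ)+1)) := by
    ext x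
    simp only [mem_Ico, mem_iUnion, mem_Icc]
    constructor
    · rintro ⟨hax, hx1⟩
      obtain ⟨n, hn⟩ := exists_nat_one_div_lt (div_pos (by linarith : (0:ℝ) < 1-x) h1a)
      refine ⟨n, hax, ?_⟩
      rw [div_lt_div_iff₀ (by positivity) h1a] at hn
      have hd : (1-a)/((n:ℝ)+1) ≤ 1 - x := by
        rw [div_le_iff₀ (by positivity)]
        nlinarith
      linarith
    · rintro ⟨n, hax, hxn⟩
      refine ⟨hax, ?_⟩
      have hd : (0:ℝ) < (1-a)/((n:ℝ)+1) := div_pos h1a (by positivity)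
      linarith
  rw [hun, hmono.measure_iUnion]
  apply iSup_le
  intro n
  have hpos : (0:ℝ) < (1-a)/((n:ℝ)+1) := div_pos h1a (by positivity)
  have hsub : Icc a (1 - (1-a)/((n:ℝ)+1)) ⊆ Ico (1/2:ℝ) 1 := by
    rintro x ⟨hx1, hx2⟩
    exact ⟨le_trans ha hx1, by linarith⟩
  refine (hμleb _ _ hsub).trans ?_
  apply ENNReal.ofReal_le_ofReal
  have : 1 - (1-a)/((n:ℝ)+1) - a ≤ 1 - a := by linarith
  nlinarith

/-- The measure of the set of points whose orbit starting at time i stays in [1/2,∞) for k steps. -/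
lemma mu_run_s11 (α : ℝ) (μ : Measure ℝ) [IsProbabilityMeasure μ]
    (hinv : MeasurePreserving (T α) μ μ) (hac : μ ≪ volume)
    (Ct : ℝ) (hCt : 0 < Ct)
    (hμleb : ∀ b c : ℝ, Set.Icc b c ⊆ Set.Ico (1/2:ℝ) 1 →
      μ (Set.Icc b c) ≤ ENNReal.ofReal (Ct * (c - b)))
    (k i : ℕ) (hk : 1 ≤ k) :
    μ {x : ℝ | ∀ j < k, (1:ℝ)/2 ≤ (T α)^[i+j] x} ≤ ENNReal.ofReal (Ct * (1/2:ℝ)^k) := by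
  have hTm : Measurable (T α) := hinv.measurable
  set A : Set ℝ := {y | ∀ j < k, (1:ℝ)/2 ≤ (T α)^[j] y} with hA
  have hpre : {x : ℝ | ∀ j < k, (1:ℝ)/2 ≤ (T α)^[i+j] x} = (T α)^[i] ⁻¹' A := by
    ext x
    simp only [mem_setOf_eq, mem_preimage, hA]
    constructor
    · intro h j hj
      have := h j hj
      rwa [Nat.add_comm i j, Function.iterate_add_apply] at this
    · intro h j hj
      have := h j hj
      rwa [← Function.iterate_add_apply, Nat.add_comm j i] at this
  have hAm : MeasurableSet A := by
    have : A = ⋂ j, ⋂ (_ : j < k), (T α)^[j] ⁻¹' Ici ((1:ℝ)/2) := by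
      ext y; simp [hA]
    rw [this]
    exact MeasurableSet.iInter fun j => MeasurableSet.iInter fun _ =>
      (hTm.iterate j) measurableSet_Ici
  rw [hpre, (hinv.iterate i).measure_preimage hAm.nullMeasurableSet]
  have hsub : A ⊆ Ico (1 - (1/2:ℝ)^k) 1 ∪ Ici (1:ℝ) := by
    intro y hy
    have hy1 : 1 - (1/2:ℝ)^k ≤ y := runB α k hk y hy
    rcases lt_or_ge y 1 with h | h
    · exact Or.inl ⟨hy1, h⟩
    · exact Or.inr h
  have hb : μ A ≤ μ (Ico (1 - (1/2:ℝ)^k) 1) := by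
    calc μ A ≤ μ (Ico (1 - (1/2:ℝ)^k) 1 ∪ Ici (1:ℝ)) := measure_mono hsub
      _ ≤ μ (Ico (1 - (1/2:ℝ)^k) 1) + μ (Ici (1:ℝ)) := measure_union_le _ _
      _ = μ (Ico (1 - (1/2:ℝ)^k) 1) := by rw [mu_Ici_one α μ hinv hac, add_zero]
  refine hb.trans ?_
  have hhalf : (1/2:ℝ)^k ≤ 1/2 := by
    calc (1/2:ℝ)^k ≤ (1/2:ℝ)^1 := pow_le_pow_of_le_one (by norm_num) (by norm_num) hk
      _ = 1/2 := pow_one _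
  have h := mu_Ico μ Ct hCt hμleb (a := 1 - (1/2:ℝ)^k)
    (by linarith) (by nlinarith [pow_pos (show (0:ℝ) < 1/2 by norm_num) k])
  simpa using h

lemma runOne_ge_iff (α : ℝ) (n : ℕ) (x : ℝ) (k : ℕ) :
    k ≤ runOne α n x ↔ ∃ i, i + k ≤ n ∧ ∀ j < k, (1:ℝ)/2 ≤ (T α)^[i+j] x := by
  set S := {k | ∃ i, i + k ≤ n ∧ ∀ j < k, (1:ℝ)/2 ≤ (T α)^[i + j] x} with hS
  have h0 : 0 ∈ S := ⟨0, by simp, fun j hj => absurd hj (Nat.not_lt_zero j)⟩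
  have hb : BddAbove S := ⟨n, fun m hm => by obtain ⟨i, hi, _⟩ := hm; omega⟩
  have hdc : ∀ {a b : ℕ}, a ≤ b → b ∈ S → a ∈ S := by
    rintro a b hab ⟨i, hi, hrun⟩
    exact ⟨i, by omega, fun j hj => hrun j (lt_of_lt_of_le hj hab)⟩
  constructor
  · intro h
    exact hdc h (Nat.sSup_mem ⟨0, h0⟩ hb)
  · intro h
    exact le_csSup hb h

lemma runOne_mono (α : ℝ) (x : ℝ) {n m : ℕ} (hnm : n ≤ m) :
    runOne α n x ≤ runOne α m x := by
  obtain ⟨i, hi, hr⟩ := (runOne_ge_iff α n x (runOne α n x)).1 le_rfl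
  exact (runOne_ge_iff α m x _).2 ⟨i, by omega, hr⟩

theorem stmt11 (α : ℝ) (hα0 : 0 < α) (hα1 : α < 1)
    (μ : Measure ℝ) [IsProbabilityMeasure μ]
    (hinv : MeasurePreserving (T α) μ μ) (hac : μ ≪ volume)
    (Ct : ℝ) (hCt : 0 < Ct)
    (hμleb : ∀ b c : ℝ, Set.Icc b c ⊆ Set.Ico (1/2:ℝ) 1 →
      μ (Set.Icc b c) ≤ ENNReal.ofReal (Ct * (c - b))) :
    ∀ᵐ x ∂μ, Filter.limsup
      (fun n : ℕ => (runOne α n x : ℝ) / Real.logb 2 n) atTop ≤ 1 := by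
  have hf0 : ∀ x : ℝ, ∀ n : ℕ, 0 ≤ (runOne α n x : ℝ) / Real.logb 2 n := by
    intro x n
    apply div_nonneg (Nat.cast_nonneg _)
    rcases Nat.eq_zero_or_pos n with h | h
    · simp [h, Real.logb]
    · exact Real.logb_nonneg (by norm_num) (by exact_mod_cast h)
  have main : ∀ m : ℕ, ∀ᵐ x ∂μ, limsup
      (fun n : ℕ => (runOne α n x : ℝ) / Real.logb 2 n) atTop ≤ ((m:ℝ)+2)/((m:ℝ)+1) := by
    intro m
    set s : ℕ → Set ℝ :=
      fun j => {x | (m+2)*(j+1) ≤ runOne α (2^((m+1)*(j+1))) x} with hs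
    have hμs : ∀ j : ℕ, μ (s j) ≤ ENNReal.ofReal ((2*Ct) * (1/2:ℝ)^(j+1)) := by
      intro j
      set n := 2^((m+1)*(j+1)) with hn
      set K := (m+2)*(j+1) with hK
      have hsub : s j ⊆ ⋃ i ∈ Finset.range (n+1),
          {x : ℝ | ∀ j' < K, (1:ℝ)/2 ≤ (T α)^[i+j'] x} := by
        intro x hx
        obtain ⟨i, hi, hr⟩ := (runOne_ge_iff α n x K).1 hx
        exact mem_biUnion (Finset.mem_range.2 (by omega)) hr
      have hKpos : 1 ≤ K := by rw [hK]; exact Nat.mul_pos (by omega) (by omega)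
      calc μ (s j) ≤ μ (⋃ i ∈ Finset.range (n+1),
            {x : ℝ | ∀ j' < K, (1:ℝ)/2 ≤ (T α)^[i+j'] x}) := measure_mono hsub
        _ ≤ ∑ i ∈ Finset.range (n+1),
            μ {x : ℝ | ∀ j' < K, (1:ℝ)/2 ≤ (T α)^[i+j'] x} := measure_biUnion_finset_le _ _
        _ ≤ ∑ i ∈ Finset.range (n+1), ENNReal.ofReal (Ct * (1/2:ℝ)^K) :=
            Finset.sum_le_sum (fun i _ => mu_run_s11 α μ hinv hac Ct hCt hμleb K i hKpos)
        _ = ((n+1 : ℕ) : ℝ≥0∞) * ENNReal.ofReal (Ct * (1/2:ℝ)^K) := by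
            rw [Finset.sum_const, Finset.card_range, nsmul_eq_mul]
        _ ≤ ENNReal.ofReal ((2*Ct) * (1/2:ℝ)^(j+1)) := ?_
      rw [← ENNReal.ofReal_natCast (n+1), ← ENNReal.ofReal_mul (by positivity)]
      apply ENNReal.ofReal_le_ofReal
      have hcast : ((n+1 : ℕ) : ℝ) = (2:ℝ)^((m+1)*(j+1)) + 1 := by
        rw [hn]; push_cast; ring
      have e1 : (2:ℝ)^((m+1)*(j+1)) * (1/2:ℝ)^K = (1/2:ℝ)^(j+1) := by
        have hKe : K = (m+1)*(j+1) + (j+1) := by rw [hK]; ring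
        rw [hKe, pow_add, ← mul_assoc, ← mul_pow]
        norm_num
      have e2 : ((1:ℝ)/2)^K ≤ (1/2:ℝ)^(j+1) := by
        apply pow_le_pow_of_le_one (by norm_num) (by norm_num)
        rw [hK]; nlinarith [Nat.zero_le m, Nat.zero_le j]
      have e3 : Ct * (1/2:ℝ)^K ≤ Ct * (1/2:ℝ)^(j+1) :=
        mul_le_mul_of_nonneg_left e2 hCt.le
      rw [hcast]
      nlinarith [e1, e3, hCt.le, pow_nonneg (show (0:ℝ) ≤ 1/2 by norm_num) K]
    have htsum : (∑' j, μ (s j)) ≠ ⊤ := by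
      apply ne_top_of_le_ne_top ?_ (ENNReal.tsum_le_tsum hμs)
      have he : ∀ j : ℕ, ENNReal.ofReal ((2*Ct) * (1/2:ℝ)^(j+1)) =
          ENNReal.ofReal (2*Ct) * (ENNReal.ofReal (1/2:ℝ))^(j+1) := by
        intro j
        rw [ENNReal.ofReal_mul (by positivity), ENNReal.ofReal_pow (by norm_num)]
      simp_rw [he]
      rw [ENNReal.tsum_mul_left, ENNReal.tsum_geometric_add_one]
      apply ENNReal.mul_ne_top ENNReal.ofReal_ne_top
      apply ENNReal.mul_ne_top ENNReal.ofReal_ne_top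
      rw [Ne, ENNReal.inv_eq_top, tsub_eq_zero_iff_le]
      exact not_le.2 (ENNReal.ofReal_lt_one.2 (by norm_num))
    filter_upwards [MeasureTheory.ae_eventually_notMem htsum] with x hx
    obtain ⟨J, hJ⟩ := eventually_atTop.1 hx
    apply le_of_forall_pos_le_add
    intro ε hε
    have hcb : IsCoboundedUnder (· ≤ ·) atTop
        (fun n : ℕ => (runOne α n x : ℝ) / Real.logb 2 n) :=
      isCoboundedUnder_le_of_le atTop (fun n => hf0 x n)
    apply Filter.limsup_le_of_le hcb
    have hlog : Tendsto (fun n : ℕ => Real.logb 2 (n:ℝ)) atTop atTop :=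
      (Real.tendsto_logb_atTop (by norm_num)).comp tendsto_natCast_atTop_atTop
    have h1 : ∀ᶠ n : ℕ in atTop, ((m:ℝ)+2) ≤ ε * Real.logb 2 (n:ℝ) := by
      filter_upwards [hlog.eventually_ge_atTop (((m:ℝ)+2)/ε)] with n hn
      rw [div_le_iff₀ hε] at hn
      linarith [hn, mul_comm ε (Real.logb 2 (n:ℝ))]
    filter_upwards [h1, eventually_ge_atTop (2^((m+1)*J)), eventually_ge_atTop 2]
      with n hn1 hnJ hn2
    set L := Real.logb 2 (n:ℝ) with hL
    have hL1 : (1:ℝ) ≤ L := by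
      rw [hL, show (1:ℝ) = Real.logb 2 2 by simp]
      exact Real.logb_le_logb_of_le (by norm_num) (by norm_num) (by exact_mod_cast hn2)
    have hL0 : (0:ℝ) < L := lt_of_lt_of_le one_pos hL1
    -- choose the block index
    set q := Nat.log 2 n / (m+1) with hq
    have hmod := Nat.div_add_mod (Nat.log 2 n) (m+1)
    rw [← hq] at hmod
    have hmodlt := Nat.mod_lt (Nat.log 2 n) (show 0 < m+1 by omega)
    have hlogq : Nat.log 2 n < (m+1)*(q+1) := by
      rw [Nat.mul_add, Nat.mul_one]
      omega
    have hnlt : n < 2^((m+1)*(q+1)) := by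
      calc n < 2^(Nat.log 2 n + 1) := Nat.lt_pow_succ_log_self (by norm_num) n
        _ ≤ 2^((m+1)*(q+1)) := Nat.pow_le_pow_right (by norm_num) (by omega)
    have hqJ : J ≤ q := by
      have hlogJ : (m+1)*J ≤ Nat.log 2 n := by
        rw [Nat.le_log_iff_pow_le (by norm_num) (by omega)]
        exact hnJ
      rw [hq, Nat.le_div_iff_mul_le (show 0 < m+1 by omega), Nat.mul_comm]
      exact hlogJ
    have hrn : runOne α n x < (m+2)*(q+1) := by
      have hmono := runOne_mono α x hnlt.le
      have hnot := hJ q hqJ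
      rw [hs] at hnot
      simp only [mem_setOf_eq, not_le] at hnot
      omega
    -- cast to ℝ
    have hrnR : (runOne α n x : ℝ) ≤ ((m:ℝ)+2)*((q:ℝ)+1) := by
      have := hrn.le
      have hcast : ((runOne α n x : ℕ) : ℝ) ≤ (((m+2)*(q+1) : ℕ) : ℝ) := by
        exact_mod_cast this
      calc (runOne α n x : ℝ) ≤ (((m+2)*(q+1) : ℕ) : ℝ) := hcast
        _ = ((m:ℝ)+2)*((q:ℝ)+1) := by push_cast; ring
    have hqR : (q:ℝ) ≤ L/((m:ℝ)+1) := by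
      calc (q:ℝ) ≤ (Nat.log 2 n : ℝ)/((m:ℝ)+1) := by
            rw [hq]; exact_mod_cast Nat.cast_div_le
        _ ≤ L/((m:ℝ)+1) := by
            apply div_le_div_of_nonneg_right ?_ (by positivity)
            exact Real.natLog_le_logb n 2
    have hrun2 : (runOne α n x : ℝ) ≤ ((m:ℝ)+2)*(L/((m:ℝ)+1) + 1) := by
      refine hrnR.trans ?_
      apply mul_le_mul_of_nonneg_left (by linarith) (by positivity)
    have hm1 : ((m:ℝ)+1) ≠ 0 := by positivity
    have hexp : ((m:ℝ)+2)*(L/((m:ℝ)+1) + 1) = (((m:ℝ)+2)/((m:ℝ)+1))*L + ((m:ℝ)+2) := by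
      field_simp
    rw [div_le_iff₀ hL0]
    rw [hexp] at hrun2
    nlinarith [hn1]
  have hall := (MeasureTheory.ae_all_iff).2 main
  filter_upwards [hall] with x hx
  apply le_of_forall_pos_le_add
  intro ε hε
  obtain ⟨m, hm⟩ := exists_nat_one_div_lt hε
  refine (hx m).trans ?_
  have he : ((m:ℝ)+2)/((m:ℝ)+1) = 1 + 1/((m:ℝ)+1) := by
    field_simp
    ring
  rw [he]
  have : (1:ℝ)/((m:ℝ)+1) < ε := by exact_mod_cast hm
  linarith
end
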